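/- arXiv:0903.3531 — 2 statements merged into one kernel-verified Lean document; each statement's English description precedes it below -/
import Mathlib

section
/- The function f(k,k',m) = A(k)A(k') + A(k)·(k/(E(k)+m))·(k'/(E(k')+m))·A(k'), where E(k)=√(k²+m²) and A(k)=√((E(k)+m)/(2E(k))), is monotonically increasing in m ≥ 0 whenever kk' < 0. -/
open Real Set

noncomputable def Ekin (k m : ℝ) : ℝ := Real.sqrt (k ^ 2 + m ^ 2)
noncomputable def Afac (k m : ℝ) : ℝ := Real.sqrt ((Ekin k m + m) / (2 * Ekin k m))

private lemma ekin_pos (k m : ℝ) (hk : k ≠ 0) : 0 < Ekin k m := by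
  unfold Ekin
  apply Real.sqrt_pos.2
  positivity

private lemma ekin_sq (k m : ℝ) : Ekin k m ^ 2 = k ^ 2 + m ^ 2 := by
  unfold Ekin
  rw [Real.sq_sqrt (by positivity)]

private lemma abs_le_ekin (k m : ℝ) : |k| ≤ Ekin k m := by
  rw [← Real.sqrt_sq_eq_abs]
  exact Real.sqrt_le_sqrt (by nlinarith [sq_nonneg m])

private lemma afac_sq (k m : ℝ) (hk : k ≠ 0) (hm : 0 ≤ m) :
    Afac k m ^ 2 = (Ekin k m + m) / (2 * Ekin k m) := by
  have hE := ekin_pos k m hk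
  unfold Afac
  rw [Real.sq_sqrt (by positivity)]

private lemma core_id (E E' k k' m : ℝ) (h : E ^ 2 = k ^ 2 + m ^ 2)
    (h' : E' ^ 2 = k' ^ 2 + m ^ 2) :
    ((E + m) * (E' + m) + k * k') ^ 2
      = 2 * ((E + m) * (E' + m)) * (E * E' + m ^ 2 + k * k') := by
  linear_combination (m ^ 2 - E' ^ 2) * h - k ^ 2 * h'

private lemma fsq (k k' m : ℝ) (hk : k ≠ 0) (hk' : k' ≠ 0) (hm : 0 ≤ m) :
    (Afac k m * Afac k' m *
        (1 + k * k' / ((Ekin k m + m) * (Ekin k' m + m)))) ^ 2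
      = (Ekin k m * Ekin k' m + m ^ 2 + k * k') /
          (2 * (Ekin k m * Ekin k' m)) := by
  have hE := ekin_pos k m hk
  have hE' := ekin_pos k' m hk'
  have h2 := ekin_sq k m
  have h2' := ekin_sq k' m
  have hA := afac_sq k m hk hm
  have hA' := afac_sq k' m hk' hm
  have hEm : 0 < Ekin k m + m := by linarith
  have hEm' : 0 < Ekin k' m + m := by linarith
  set E := Ekin k m
  set E' := Ekin k' m
  have hcore := core_id E E' k k' m h2 h2'
  have h1 : 1 + k * k' / ((E + m) * (E' + m))
      = ((E + m) * (E' + m) + k * k') / ((E + m) * (E' + m)) := by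
    field_simp
  rw [mul_pow, mul_pow, hA, hA', h1, div_pow]
  field_simp
  linear_combination hcore

private lemma fnonneg (k k' m : ℝ) (hkk' : k * k' < 0) (hm : 0 ≤ m) :
    0 ≤ Afac k m * Afac k' m *
        (1 + k * k' / ((Ekin k m + m) * (Ekin k' m + m))) := by
  have hk : k ≠ 0 := fun h => by simp [h] at hkk'
  have hk' : k' ≠ 0 := fun h => by simp [h] at hkk'
  have hE := ekin_pos k m hk
  have hE' := ekin_pos k' m hk'
  have hka := abs_le_ekin k m
  have hka' := abs_le_ekin k' m
  have habs : |k| * |k'| ≤ Ekin k m * Ekin k' m :=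
    mul_le_mul hka hka' (abs_nonneg _) (le_of_lt hE)
  have hkk : -(k * k') ≤ Ekin k m * Ekin k' m := by
    calc -(k * k') = |k * k'| := (abs_of_neg hkk').symm
      _ = |k| * |k'| := abs_mul k k'
      _ ≤ _ := habs
  have hP : 0 < (Ekin k m + m) * (Ekin k' m + m) := by positivity
  have hPE : Ekin k m * Ekin k' m ≤ (Ekin k m + m) * (Ekin k' m + m) := by
    nlinarith
  have h3 : 0 ≤ 1 + k * k' / ((Ekin k m + m) * (Ekin k' m + m)) := by
    rw [← sub_nonneg]
    have : 1 + k * k' / ((Ekin k m + m) * (Ekin k' m + m)) - 0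
        = ((Ekin k m + m) * (Ekin k' m + m) + k * k') /
            ((Ekin k m + m) * (Ekin k' m + m)) := by field_simp; ring
    rw [this]
    apply div_nonneg _ (le_of_lt hP)
    linarith
  exact mul_nonneg (mul_nonneg (Real.sqrt_nonneg _) (Real.sqrt_nonneg _)) h3

private lemma le_of_sq_le_sq' (x y : ℝ) (hx : 0 ≤ x) (hy : 0 ≤ y)
    (h : x ^ 2 ≤ y ^ 2) : x ≤ y := by
  have := Real.sqrt_le_sqrt h
  rwa [Real.sqrt_sq hx, Real.sqrt_sq hy] at this

/-- The key monotonicity of `(m² + kk')·v ≤ ...` level. -/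
private lemma key_ineq (k k' m₁ m₂ u v : ℝ) (hkk' : k * k' < 0)
    (hm1 : 0 ≤ m₁) (h12 : m₁ ≤ m₂)
    (hu : 0 < u) (hv : 0 < v)
    (hu2 : u ^ 2 = (k ^ 2 + m₁ ^ 2) * (k' ^ 2 + m₁ ^ 2))
    (hv2 : v ^ 2 = (k ^ 2 + m₂ ^ 2) * (k' ^ 2 + m₂ ^ 2)) :
    (m₁ ^ 2 + k * k') * v ≤ (m₂ ^ 2 + k * k') * u := by
  have hst : m₁ ^ 2 ≤ m₂ ^ 2 := by nlinarith
  rcases le_or_gt (m₂ ^ 2 + k * k') 0 with h2 | h2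
  · -- both factors ≤ 0
    have h1 : m₁ ^ 2 + k * k' ≤ 0 := by linarith
    have hgoal : (-(m₂ ^ 2 + k * k')) * u ≤ (-(m₁ ^ 2 + k * k')) * v := by
      apply le_of_sq_le_sq' _ _ (by nlinarith) (by nlinarith)
      have hprod : 0 ≤ (m₂ ^ 2 - m₁ ^ 2) * (k - k') ^ 2 *
          (k ^ 2 * k' ^ 2 - m₁ ^ 2 * m₂ ^ 2) := by
        have hc : m₂ ^ 2 ≤ -(k * k') := by linarith
        have : m₁ ^ 2 * m₂ ^ 2 ≤ k ^ 2 * k' ^ 2 := by nlinarith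
        have h1' : 0 ≤ m₂ ^ 2 - m₁ ^ 2 := by linarith
        exact mul_nonneg (mul_nonneg h1' (sq_nonneg _)) (by linarith)
      have e1 : ((-(m₂ ^ 2 + k * k')) * u) ^ 2
          = (m₂ ^ 2 + k * k') ^ 2 * ((k ^ 2 + m₁ ^ 2) * (k' ^ 2 + m₁ ^ 2)) := by
        rw [mul_pow, hu2]; ring
      have e2 : ((-(m₁ ^ 2 + k * k')) * v) ^ 2
          = (m₁ ^ 2 + k * k') ^ 2 * ((k ^ 2 + m₂ ^ 2) * (k' ^ 2 + m₂ ^ 2)) := by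
        rw [mul_pow, hv2]; ring
      rw [e1, e2]
      nlinarith [hprod]
    nlinarith [hgoal]
  · rcases le_or_gt 0 (m₁ ^ 2 + k * k') with h1 | h1
    · -- both factors ≥ 0
      apply le_of_sq_le_sq' _ _ (by positivity) (by positivity)
      have hcc : k ^ 2 * k' ^ 2 ≤ m₁ ^ 2 * m₂ ^ 2 := by nlinarith
      have hprod : 0 ≤ (m₂ ^ 2 - m₁ ^ 2) * (k - k') ^ 2 *
          (m₁ ^ 2 * m₂ ^ 2 - k ^ 2 * k' ^ 2) := by
        exact mul_nonneg (mul_nonneg (by linarith) (sq_nonneg _)) (by linarith)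
      have e1 : ((m₁ ^ 2 + k * k') * v) ^ 2
          = (m₁ ^ 2 + k * k') ^ 2 * ((k ^ 2 + m₂ ^ 2) * (k' ^ 2 + m₂ ^ 2)) := by
        rw [mul_pow, hv2]
      have e2 : ((m₂ ^ 2 + k * k') * u) ^ 2
          = (m₂ ^ 2 + k * k') ^ 2 * ((k ^ 2 + m₁ ^ 2) * (k' ^ 2 + m₁ ^ 2)) := by
        rw [mul_pow, hu2]
      rw [e1, e2]
      nlinarith [hprod]
    · -- mixed signs
      have hL : (m₁ ^ 2 + k * k') * v ≤ 0 :=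
        mul_nonpos_of_nonpos_of_nonneg (le_of_lt h1) (le_of_lt hv)
      have hR : 0 ≤ (m₂ ^ 2 + k * k') * u :=
        mul_nonneg (le_of_lt h2) (le_of_lt hu)
      linarith

/-- For `k k' < 0`, the function
`m ↦ A(k,m)A(k',m)(1 + kk'/((E(k,m)+m)(E(k',m)+m)))` is monotonically
increasing on `[0,∞)`. -/
theorem stmt0 (k k' : ℝ) (hkk' : k * k' < 0) :
    MonotoneOn
      (fun m : ℝ =>
        Afac k m * Afac k' m *
          (1 + k * k' / ((Ekin k m + m) * (Ekin k' m + m))))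
      (Set.Ici (0 : ℝ)) := by
  have hk : k ≠ 0 := fun h => by simp [h] at hkk'
  have hk' : k' ≠ 0 := fun h => by simp [h] at hkk'
  intro m₁ hm1 m₂ hm2 h12
  simp only [Set.mem_Ici] at hm1 hm2
  have hf1 := fnonneg k k' m₁ hkk' hm1
  have hf2 := fnonneg k k' m₂ hkk' hm2
  apply le_of_sq_le_sq' _ _ hf1 hf2
  rw [fsq k k' m₁ hk hk' hm1, fsq k k' m₂ hk hk' hm2]
  have hE1 := ekin_pos k m₁ hk
  have hE1' := ekin_pos k' m₁ hk'
  have hE2 := ekin_pos k m₂ hk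
  have hE2' := ekin_pos k' m₂ hk'
  have hu : 0 < Ekin k m₁ * Ekin k' m₁ := mul_pos hE1 hE1'
  have hv : 0 < Ekin k m₂ * Ekin k' m₂ := mul_pos hE2 hE2'
  have hu2 : (Ekin k m₁ * Ekin k' m₁) ^ 2
      = (k ^ 2 + m₁ ^ 2) * (k' ^ 2 + m₁ ^ 2) := by
    rw [mul_pow, ekin_sq, ekin_sq]
  have hv2 : (Ekin k m₂ * Ekin k' m₂) ^ 2
      = (k ^ 2 + m₂ ^ 2) * (k' ^ 2 + m₂ ^ 2) := by
    rw [mul_pow, ekin_sq, ekin_sq]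
  have key := key_ineq k k' m₁ m₂ (Ekin k m₁ * Ekin k' m₁)
    (Ekin k m₂ * Ekin k' m₂) hkk' hm1 h12 hu hv hu2 hv2
  rw [div_le_div_iff₀ (by positivity) (by positivity)]
  nlinarith [key, mul_pos hu hv]
end

section
/- For kk' > 0 with k ≠ k', the function m ↦ f(k,k',m) = A(k)A(k')(1 + kk'/((E(k)+m)(E(k')+m))) satisfies ∂f/∂m = 0 at m = 0, where E(k)=√(k²+m²) and A(k)=√((E(k)+m)/(2E(k))). -/
open Real Set

lemma Ekin_zero (k : ℝ) : Ekin k 0 = |k| := by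
  simp [Ekin, Real.sqrt_sq_eq_abs]

lemma hasDerivAt_Ekin (k : ℝ) (hk : k ≠ 0) : HasDerivAt (fun m => Ekin k m) 0 0 := by
  have h1 : HasDerivAt (fun m : ℝ => k ^ 2 + m ^ 2) 0 0 := by
    simpa using (hasDerivAt_pow 2 (0:ℝ)).const_add (k ^ 2)
  have hne : k ^ 2 + (0:ℝ) ^ 2 ≠ 0 := by simpa using pow_ne_zero 2 hk
  have h2 : HasDerivAt (fun m => Real.sqrt (k ^ 2 + m ^ 2)) _ 0 := (Real.hasDerivAt_sqrt hne).comp 0 h1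
  simpa [Ekin, Function.comp] using h2

lemma hasDerivAt_EkinAdd (k : ℝ) (hk : k ≠ 0) :
    HasDerivAt (fun m => Ekin k m + m) 1 0 := by
  simpa using (show HasDerivAt (fun m => Ekin k m + m) (0 + 1) 0 from (hasDerivAt_Ekin k hk).add (hasDerivAt_id (0:ℝ)))

lemma Afac_zero (k : ℝ) (hk : k ≠ 0) : Afac k 0 = Real.sqrt (1/2) := by
  have : |k| ≠ 0 := abs_ne_zero.mpr hk
  rw [Afac, Ekin_zero]
  congr 1
  field_simp
  ring

lemma hasDerivAt_Afac (k : ℝ) (hk : k ≠ 0) :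
    HasDerivAt (fun m => Afac k m) (Real.sqrt 2 / (4 * |k|)) 0 := by
  have ha : (0:ℝ) < |k| := abs_pos.mpr hk
  have hnum := hasDerivAt_EkinAdd k hk
  have hden : HasDerivAt (fun m => 2 * Ekin k m) 0 0 := by
    simpa using (hasDerivAt_Ekin k hk).const_mul 2
  have hd0 : 2 * Ekin k 0 ≠ 0 := by rw [Ekin_zero]; positivity
  have hg := hnum.div hden hd0
  have hg0 : (Ekin k 0 + 0) / (2 * Ekin k 0) = 1/2 := by
    rw [Ekin_zero]; field_simp; ring
  have hgne : (Ekin k 0 + 0) / (2 * Ekin k 0) ≠ 0 := by rw [hg0]; norm_num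
  have h2 : HasDerivAt (fun m => Real.sqrt ((Ekin k m + m) / (2 * Ekin k m))) _ 0 :=
    (Real.hasDerivAt_sqrt hgne).comp 0 hg
  have : HasDerivAt (fun m => Afac k m)
      (1 / (2 * Real.sqrt ((Ekin k 0 + 0) / (2 * Ekin k 0))) *
        ((1 * (2 * Ekin k 0) - (Ekin k 0 + 0) * 0) / (2 * Ekin k 0) ^ 2)) 0 := by
    simpa [Afac, Function.comp] using h2
  convert this using 1
  rw [hg0, Ekin_zero]
  have hs : Real.sqrt 2 * Real.sqrt (1/2) = 1 := by
    rw [← Real.sqrt_mul (by norm_num)]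
    norm_num
  have hs0 : (0:ℝ) < Real.sqrt (1/2) := Real.sqrt_pos.mpr (by norm_num)
  have h2pos : (0:ℝ) < Real.sqrt 2 := Real.sqrt_pos.mpr (by norm_num)
  field_simp
  nlinarith [hs, sq_nonneg (Real.sqrt 2), Real.sq_sqrt (by norm_num : (2:ℝ) ≥ 0)]

/-- For `kk' > 0`, `k ≠ k'`, the function
`f(m) = A(k,m)A(k',m)(1 + kk'/((E(k,m)+m)(E(k',m)+m)))` is differentiable at
`m = 0` with derivative `0`. -/
theorem stmt1 (k k' : ℝ) (hkk' : 0 < k * k') (hne : k ≠ k') :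
    HasDerivAt
      (fun m : ℝ =>
        Afac k m * Afac k' m *
          (1 + k * k' / ((Ekin k m + m) * (Ekin k' m + m))))
      0 0 := by
  have hk : k ≠ 0 := fun h => by simp [h] at hkk'
  have hk' : k' ≠ 0 := fun h => by simp [h] at hkk'
  have ha : (0:ℝ) < |k| := abs_pos.mpr hk
  have hb : (0:ℝ) < |k'| := abs_pos.mpr hk'
  have hab : |k| * |k'| = k * k' := by rw [← abs_mul, abs_of_pos hkk']
  have hA := hasDerivAt_Afac k hk
  have hA' := hasDerivAt_Afac k' hk'
  have hnum := hasDerivAt_EkinAdd k hk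
  have hnum' := hasDerivAt_EkinAdd k' hk'
  have hD := hnum.mul hnum'
  have hD0 : (Ekin k 0 + 0) * (Ekin k' 0 + 0) ≠ 0 := by
    rw [Ekin_zero, Ekin_zero]; positivity
  have hfrac := (hasDerivAt_const (0:ℝ) (k * k')).div hD hD0
  have hh := hfrac.const_add 1
  have hf : HasDerivAt (fun m : ℝ => Afac k m * Afac k' m *
      (1 + k * k' / ((Ekin k m + m) * (Ekin k' m + m)))) _ 0 := (hA.mul hA').mul hh
  simp only [Pi.mul_apply, Pi.div_apply] at hf
  convert hf using 1
  rw [Ekin_zero, Ekin_zero, Afac_zero k hk, Afac_zero k' hk']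
  have hs : Real.sqrt 2 * Real.sqrt (1/2) = 1 := by
    rw [← Real.sqrt_mul (by norm_num)]
    norm_num
  have hs0 : (0:ℝ) < Real.sqrt (1/2) := Real.sqrt_pos.mpr (by norm_num)
  have h2pos : (0:ℝ) < Real.sqrt 2 := Real.sqrt_pos.mpr (by norm_num)
  have hs2 : Real.sqrt (1/2) ^ 2 = 1/2 := Real.sq_sqrt (by norm_num)
  field_simp
  linear_combination (-(-|k| * |k'|^2 * √2 * √(1/2) + 4 * |k| * |k'|^2 * √(1/2)^2 - |k|^2 * |k'| * √2 * √(1/2) + 4 * |k|^2 * |k'| * √(1/2)^2 - 8 * |k|^2 * |k'|^3 * √2 - 8 * |k|^3 * |k'|^2 * √2)) * hab - 8 * √2 * (|k|^2 * |k'|^3 + |k|^3 * |k'|^2) * hab - 2 * (|k|^2 * |k'|^3 + |k|^3 * |k'|^2) * hs + 4 * (|k|^2 * |k'|^3 + |k|^3 * |k'|^2) * hs2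
end
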